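/- For every integer n ≥ 1, 4·∑_{k=1}^{n} F_{2k}^3 = (F_{2n+1} - 1)^2·(F_{2n+1} + 2). -/

import Mathlib

lemma cassini (n : ℕ) : (Nat.fib (n+1) : ℤ)^2 - Nat.fib n * Nat.fib (n+2) = (-1)^n := by
  induction n with
  | zero => simp
  | succ m ih =>
    have h := Nat.fib_add_two (n := m)
    have h2 := Nat.fib_add_two (n := m+1)
    push_cast [h2, h] at *
    ring_nf at ih ⊢
    linarith

theorem stmt_7 (n : ℕ) (hn : 1 ≤ n) :
    4 * ∑ k ∈ Finset.Icc 1 n, (Nat.fib (2 * k) : ℤ) ^ 3 =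
      ((Nat.fib (2 * n + 1) : ℤ) - 1) ^ 2 * ((Nat.fib (2 * n + 1) : ℤ) + 2) := by
  induction n, hn using Nat.le_induction with
  | base => norm_num
  | succ n hn ih =>
    rw [Finset.sum_Icc_succ_top (by omega : 1 ≤ n + 1), mul_add, ih]
    have hc := cassini (2 * n + 1)
    have h1 : Nat.fib (2 * (n+1) + 1) = Nat.fib (2*n+2) + Nat.fib (2*n+1) := by
      have := Nat.fib_add_two (n := 2*n+1)
      rw [show 2*n+1+2 = 2*(n+1)+1 by ring, show 2*n+1+1 = 2*n+2 by ring] at this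
      omega
    have h2 : 2 * (n + 1) = 2 * n + 2 := by ring
    rw [h1, h2]
    have hodd : ((-1 : ℤ))^(2*n+1) = -1 := by
      rw [pow_succ, pow_mul]; norm_num
    rw [hodd] at hc
    have h3 : (2*n+1)+2 = 2*n+3 := by ring
    rw [h3] at hc
    have h4 : (Nat.fib (2*n+3) : ℤ) = Nat.fib (2*n+2) + Nat.fib (2*n+1) := by
      have := Nat.fib_add_two (n := 2*n+1)
      push_cast [show 2*n+1+2 = 2*n+3 from rfl, show 2*n+1+1 = 2*n+2 from rfl] at this
      linarith
    rw [h4] at hc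
    push_cast
    nlinarith [hc]
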